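/- Let α ∈ (1,2) and g_k^{(α)} = (−1)^k C(α,k). Then every partial sum with at least two terms is negative: ∑_{k=0}^{n} g_k^{(α)} < 0 for all n ≥ 1, and the absolute series sums to ∑_{k=0}^∞ |g_k^{(α)}| = 2α. -/

import Mathlib

open Finset Filter

noncomputable def fracBinom (α : ℝ) (k : ℕ) : ℝ :=
  (-1) ^ k / (Nat.factorial k) * ∏ i ∈ Finset.range k, (α - i)

lemma fracBinom_zero (α : ℝ) : fracBinom α 0 = 1 := by simp [fracBinom]

lemma fracBinom_one (α : ℝ) : fracBinom α 1 = -α := by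
  simp [fracBinom]

lemma fracBinom_succ (α : ℝ) (k : ℕ) :
    fracBinom α (k+1) = fracBinom α k * (((k:ℝ) - α) / (k+1)) := by
  have hk : (Nat.factorial k : ℝ) ≠ 0 := Nat.cast_ne_zero.mpr (Nat.factorial_ne_zero k)
  have hk1 : ((k:ℝ) + 1) ≠ 0 := by positivity
  unfold fracBinom
  rw [Finset.prod_range_succ, Nat.factorial_succ]
  push_cast
  field_simp
  ring

lemma fracBinom_two_add (α : ℝ) (k : ℕ) :
    fracBinom α (k+2) = α * (α-1) / (Nat.factorial (k+2)) *
      ∏ j ∈ Finset.range k, ((j:ℝ) + 2 - α) := by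
  induction k with
  | zero =>
    rw [show (0+2) = 1+1 from rfl, fracBinom_succ, fracBinom_one]
    simp [Nat.factorial]
    ring
  | succ k ih =>
    have hf : ((k+1+2).factorial : ℝ) = ((k:ℝ)+3) * ((k+2).factorial : ℝ) := by
      rw [show k+1+2 = (k+2)+1 from rfl, Nat.factorial_succ]
      push_cast; ring
    have h1 : ((k+2).factorial : ℝ) ≠ 0 := Nat.cast_ne_zero.mpr (Nat.factorial_ne_zero _)
    have h2 : ((k:ℝ) + 3) ≠ 0 := by positivity
    rw [show k+1+2 = (k+2)+1 from rfl, fracBinom_succ, ih, Finset.prod_range_succ,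
        show (k+2)+1 = k+1+2 from rfl, hf]
    push_cast
    field_simp
    ring

lemma sum_formula (α : ℝ) (n : ℕ) :
    ∑ k ∈ Finset.range (n+2), fracBinom α k
      = -((α-1) / (Nat.factorial (n+1)) * ∏ j ∈ Finset.range n, ((j:ℝ) + 2 - α)) := by
  induction n with
  | zero =>
    simp [Finset.sum_range_succ, fracBinom_zero, fracBinom_one, Nat.factorial]
    ring
  | succ n ih =>
    have hf : ((n+1+1).factorial : ℝ) = ((n:ℝ)+2) * ((n+1).factorial : ℝ) := by
      rw [show n+1+1 = (n+1)+1 from rfl, Nat.factorial_succ]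
      push_cast; ring
    have h1 : ((n+1).factorial : ℝ) ≠ 0 := Nat.cast_ne_zero.mpr (Nat.factorial_ne_zero _)
    have h2 : ((n:ℝ) + 2) ≠ 0 := by positivity
    rw [show n+1+2 = (n+2)+1 from rfl, Finset.sum_range_succ, ih, fracBinom_two_add,
        Finset.prod_range_succ, show n+1+1 = n+2 from rfl, hf]
    push_cast
    field_simp
    ring

lemma prod_range_cast_fact (m : ℕ) :
    ∏ j ∈ Finset.range m, ((j:ℝ) + 1) = (Nat.factorial m : ℝ) := by
  induction m with
  | zero => simp
  | succ m ih => rw [Finset.prod_range_succ, ih, Nat.factorial_succ]; push_cast; ring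

theorem fracBinom_partial_sums_neg_and_abs_sum (α : ℝ) (hα : α ∈ Set.Ioo (1 : ℝ) 2) :
    (∀ n : ℕ, 1 ≤ n → ∑ k ∈ Finset.range (n + 1), fracBinom α k < 0) ∧
    HasSum (fun k : ℕ => |fracBinom α k|) (2 * α) := by
  obtain ⟨h1, h2⟩ := hα
  have hα0 : 0 < α := by linarith
  have hα1 : 0 < α - 1 := by linarith
  have hprod_pos : ∀ n : ℕ, 0 < ∏ j ∈ Finset.range n, ((j:ℝ) + 2 - α) := by
    intro n
    apply Finset.prod_pos
    intro j _
    have : (0:ℝ) ≤ (j:ℝ) := Nat.cast_nonneg j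
    linarith
  have hfac : ∀ n : ℕ, (0:ℝ) < (Nat.factorial n : ℝ) := by
    intro n; exact_mod_cast Nat.factorial_pos n
  -- partial sums negative
  have hneg : ∀ n : ℕ, 1 ≤ n → ∑ k ∈ Finset.range (n + 1), fracBinom α k < 0 := by
    intro n hn
    obtain ⟨m, rfl⟩ := Nat.exists_eq_add_of_le hn
    rw [show 1 + m + 1 = m + 2 from by ring, sum_formula]
    have := hprod_pos m
    have := hfac (m+1)
    have : 0 < (α-1) / (Nat.factorial (m+1)) * ∏ j ∈ Finset.range m, ((j:ℝ) + 2 - α) := by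
      positivity
    linarith
  refine ⟨hneg, ?_⟩
  have habs : ∀ k : ℕ, |fracBinom α k| = fracBinom α k + (if k = 1 then 2*α else 0) := by
    intro k
    match k with
    | 0 => simp [fracBinom_zero]
    | 1 => simp [fracBinom_one, abs_of_nonneg hα0.le]; ring
    | (k+2) =>
      have hpos : 0 ≤ fracBinom α (k+2) := by
        rw [fracBinom_two_add]
        have := hprod_pos k
        have := hfac (k+2)
        positivity
      simp [abs_of_nonneg hpos]
  have hT : ∀ m : ℕ, ∑ k ∈ Finset.range (m+2), |fracBinom α k|
      = (∑ k ∈ Finset.range (m+2), fracBinom α k) + 2*α := by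
    intro m
    have : ∑ k ∈ Finset.range (m+2), |fracBinom α k|
        = ∑ k ∈ Finset.range (m+2), (fracBinom α k + (if k = 1 then 2*α else 0)) :=
      Finset.sum_congr rfl (fun k _ => habs k)
    rw [this, Finset.sum_add_distrib, Finset.sum_ite_eq' (Finset.range (m+2)) 1 (fun _ => 2*α)]
    simp
  have hbound : ∀ m : ℕ, |∑ k ∈ Finset.range (m+2), fracBinom α k| ≤ (α-1) / (m+1) := by
    intro m
    rw [sum_formula, abs_neg]
    have hfp := hfac (m+1)
    have hpp := hprod_pos m
    rw [abs_of_nonneg (by positivity)]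
    have hPle : ∏ j ∈ Finset.range m, ((j:ℝ) + 2 - α) ≤ (Nat.factorial m : ℝ) := by
      rw [← prod_range_cast_fact m]
      apply Finset.prod_le_prod
      · intro j _; have : (0:ℝ) ≤ (j:ℝ) := Nat.cast_nonneg j; linarith
      · intro j _; linarith
    have hfs : (Nat.factorial (m+1) : ℝ) = ((m:ℝ)+1) * (Nat.factorial m : ℝ) := by
      rw [Nat.factorial_succ]; push_cast; ring
    have hm1 : (0:ℝ) < (m:ℝ) + 1 := by positivity
    rw [div_mul_eq_mul_div, div_le_div_iff₀ hfp hm1, hfs]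
    nlinarith [mul_le_mul_of_nonneg_right (mul_le_mul_of_nonneg_left hPle hα1.le) hm1.le,
      hfac m]
  have htend0 : Tendsto (fun m : ℕ => ∑ k ∈ Finset.range (m+2), fracBinom α k)
      atTop (nhds 0) := by
    apply squeeze_zero_norm hbound
    have h := (tendsto_const_div_atTop_nhds_zero_nat (α-1)).comp (tendsto_add_atTop_nat 1)
    have heq : (fun m : ℕ => (α-1)/((m:ℝ)+1))
        = (fun n : ℕ => (α-1)/(n:ℝ)) ∘ (fun m => m+1) := by
      funext m; simp [Function.comp]
    rw [heq]
    exact h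
  rw [hasSum_iff_tendsto_nat_of_nonneg (fun k => abs_nonneg _)]
  rw [← Filter.tendsto_add_atTop_iff_nat 2]
  have : (fun m : ℕ => ∑ k ∈ Finset.range (m+2), |fracBinom α k|)
      = fun m : ℕ => (∑ k ∈ Finset.range (m+2), fracBinom α k) + 2*α := funext hT
  rw [this]
  simpa using htend0.add_const (2*α)
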